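/- For every real A there exists a nonempty Π⁰₁(A) class C ⊆ 2^ω (a class of the form [T] for a tree T ⊆ 2^{<ω} computable in A) such that every f ∈ C satisfies f ∈ PA(A) and A ≤_tt f; indeed there is a single infinite computable set M such that every f ∈ C codes A on the positions in M, i.e., Restr(f, M) = A. -/

import Mathlib

/-- `A` is truth-table reducible to `B`: there is a computable bound `f` and a total
computable evaluator `g` such that `A n` is determined by `B ↾ f n` via `g`. -/
def TTReducible (A B : ℕ → Bool) : Prop :=
  ∃ f : ℕ → ℕ, Computable f ∧ ∃ g : ℕ → List Bool → Bool, Computable₂ g ∧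
    ∀ n, A n = g n ((List.range (f n)).map B)

/-- Truth-table equivalence. -/
def TTEquiv (A B : ℕ → Bool) : Prop := TTReducible A B ∧ TTReducible B A

/-- The effective join `A ⊕ B`. -/
def ttJoin (A B : ℕ → Bool) : ℕ → Bool :=
  fun n => if n % 2 = 0 then A (n / 2) else B (n / 2)

/-- Codes for oracle (relative) partial recursive functions. -/
inductive OCode : Type
  | zero | succ | left | right | oracle
  | pair : OCode → OCode → OCode
  | comp : OCode → OCode → OCode
  | prec : OCode → OCode → OCode
  | rfind' : OCode → OCode

/-- Evaluation of an oracle code relative to an oracle `O : ℕ → Bool`. -/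
def OCode.eval (O : ℕ → Bool) : OCode → ℕ →. ℕ
  | .zero => pure 0
  | .succ => fun n => Part.some (n + 1)
  | .left => fun n : ℕ => Part.some n.unpair.1
  | .right => fun n : ℕ => Part.some n.unpair.2
  | .oracle => fun n => Part.some (cond (O n) 1 0)
  | .pair cf cg => fun n => Nat.pair <$> OCode.eval O cf n <*> OCode.eval O cg n
  | .comp cf cg => fun n => OCode.eval O cg n >>= OCode.eval O cf
  | .prec cf cg =>
    Nat.unpaired fun a n =>
      n.rec (OCode.eval O cf a) fun y IH => do
        let i ← IH
        OCode.eval O cg (Nat.pair a (Nat.pair y i))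
  | .rfind' cf =>
    Nat.unpaired fun a m =>
      (Nat.rfind fun n => (fun m => m = 0) <$> OCode.eval O cf (Nat.pair a (n + m))).map (· + m)

/-- A standard enumeration of the oracle codes. -/
def OCode.ofNat : ℕ → OCode
  | 0 => .zero
  | 1 => .succ
  | 2 => .left
  | 3 => .right
  | 4 => .oracle
  | n + 5 =>
    let m := n.div2.div2
    have hm : m < n + 5 := by
      simp only [m, Nat.div2_val]
      exact lt_of_le_of_lt (le_trans (Nat.div_le_self _ _) (Nat.div_le_self _ _))
        (by omega)
    have _m1 : m.unpair.1 < n + 5 := lt_of_le_of_lt m.unpair_left_le hm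
    have _m2 : m.unpair.2 < n + 5 := lt_of_le_of_lt m.unpair_right_le hm
    match n.bodd, n.div2.bodd with
    | false, false => .pair (OCode.ofNat m.unpair.1) (OCode.ofNat m.unpair.2)
    | false, true  => .comp (OCode.ofNat m.unpair.1) (OCode.ofNat m.unpair.2)
    | true , false => .prec (OCode.ofNat m.unpair.1) (OCode.ofNat m.unpair.2)
    | true , true  => .rfind' (OCode.ofNat m)
decreasing_by
  all_goals
    have h1 : (Nat.unpair n.div2.div2).1 < n + 5 := _m1
    have h2 : (Nat.unpair n.div2.div2).2 < n + 5 := _m2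
    have h3 : n.div2.div2 < n + 5 := hm
    simp only [Nat.succ_eq_add_one] at *
    omega

open Classical in
/-- The Turing jump `X′` of a real `X` : the halting problem relative to `X`. -/
noncomputable def ttJump (X : ℕ → Bool) : ℕ → Bool :=
  fun e => if ((OCode.ofNat e).eval X e).Dom then true else false

/-- The `n`-th iterated jump. -/
noncomputable def ttJumpIter : ℕ → (ℕ → Bool) → (ℕ → Bool)
  | 0, X => X
  | n + 1, X => ttJump (ttJumpIter n X)

/-- The initial segment `X ↾ l` of a real, as a finite binary string. -/
def strPrefix (X : ℕ → Bool) (l : ℕ) : List Bool := (List.range l).map X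

/-- `S` is a `Σ₂` set of strings. -/
def IsSigma2 (S : Set (List Bool)) : Prop :=
  ∃ R : List Bool → ℕ → ℕ → Bool,
    Computable (fun p : List Bool × ℕ × ℕ => R p.1 p.2.1 p.2.2) ∧
    ∀ σ, σ ∈ S ↔ ∃ a, ∀ b, R σ a b = true

/-- `X` is 2-generic: for every `Σ₂` set `S` of strings, either some initial segment of `X`
is in `S`, or past some initial segment no extension is in `S`. -/
def TwoGeneric (X : ℕ → Bool) : Prop :=
  ∀ S : Set (List Bool), IsSigma2 S →
    (∃ l, strPrefix X l ∈ S) ∨ (∃ l, ∀ τ : List Bool, strPrefix X l <+: τ → τ ∉ S)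

/-- `PA(A)`: the class of binary-valued functions diagonally noncomputable relative to `A`,
i.e. `f x` differs from `{x}^A(x)` for every `x`. -/
def PArel (A : ℕ → Bool) : Set (ℕ → Bool) :=
  {f | ∀ x : ℕ, ¬ ((cond (f x) 1 0 : ℕ) ∈ (OCode.ofNat x).eval A x)}

/-- A set of strings is a tree if it is closed under prefixes. -/
def IsStringTree (T : Set (List Bool)) : Prop :=
  ∀ σ τ : List Bool, σ ∈ T → τ <+: σ → τ ∈ T

open Classical in
/-- A set of strings is computable in `A` if some oracle code decides membership in it
relative to `A`. -/
noncomputable def TreeComputableIn (A : ℕ → Bool) (T : Set (List Bool)) : Prop :=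
  ∃ c : OCode, ∀ σ : List Bool,
    c.eval A (Encodable.encode σ) = Part.some (if σ ∈ T then 1 else 0)

/-- The set of infinite paths through a tree of strings. -/
def treePaths (T : Set (List Bool)) : Set (ℕ → Bool) :=
  {f | ∀ n : ℕ, strPrefix f n ∈ T}

namespace OCode

def pEval (φ : ℕ →. ℕ) : OCode → ℕ →. ℕ
  | .zero => pure 0
  | .succ => fun n => Part.some (n + 1)
  | .left => fun n : ℕ => Part.some n.unpair.1
  | .right => fun n : ℕ => Part.some n.unpair.2
  | .oracle => φ
  | .pair cf cg => fun n => Nat.pair <$> pEval φ cf n <*> pEval φ cg n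
  | .comp cf cg => fun n => pEval φ cg n >>= pEval φ cf
  | .prec cf cg =>
    Nat.unpaired fun a n =>
      n.rec (pEval φ cf a) fun y IH => do
        let i ← IH
        pEval φ cg (Nat.pair a (Nat.pair y i))
  | .rfind' cf =>
    Nat.unpaired fun a m =>
      (Nat.rfind fun n => (fun m => m = 0) <$> pEval φ cf (Nat.pair a (n + m))).map (· + m)

theorem eval_eq_pEval (O : ℕ → Bool) (c : OCode) :
    c.eval O = pEval (fun n => Part.some (cond (O n) 1 0)) c := by
  induction c <;> simp only [OCode.eval, pEval, *] <;> rfl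

theorem pEval_mono {φ ψ : ℕ →. ℕ} (H : ∀ n a, a ∈ φ n → a ∈ ψ n) :
    ∀ (c : OCode) (n a : ℕ), a ∈ pEval φ c n → a ∈ pEval ψ c n := by
  intro c
  induction c with
  | zero => exact fun n a h => h
  | succ => exact fun n a h => h
  | left => exact fun n a h => h
  | right => exact fun n a h => h
  | oracle => exact H
  | pair cf cg hf hg =>
    intro n a h
    simp only [pEval, Seq.seq, Part.bind_eq_bind, Part.mem_bind_iff, Part.map_eq_map,
      Part.mem_map_iff] at h ⊢
    rcases h with ⟨g, ⟨x, hx, rfl⟩, y, hy, rfl⟩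
    exact ⟨_, ⟨x, hf _ _ hx, rfl⟩, y, hg _ _ hy, rfl⟩
  | comp cf cg hf hg =>
    intro n a h
    simp only [pEval, Part.bind_eq_bind, Part.mem_bind_iff] at h ⊢
    rcases Part.mem_bind_iff.1 h with ⟨x, hx, hy⟩
    exact Part.mem_bind_iff.2 ⟨x, hg _ _ hx, hf _ _ hy⟩
  | prec cf cg hf hg =>
    intro n
    simp only [pEval, Nat.unpaired]
    induction n.unpair.2 with
    | zero => exact hf _
    | succ m IH =>
      intro a h
      simp only [Part.bind_eq_bind, Part.mem_bind_iff] at h ⊢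
      rcases h with ⟨i, hi, h⟩
      exact ⟨i, IH _ hi, hg _ _ h⟩
  | rfind' cf hf =>
    intro n a h
    simp only [pEval, Nat.unpaired, Part.mem_map_iff] at h ⊢
    rcases h with ⟨b, hb, rfl⟩
    refine ⟨b, ?_, rfl⟩
    replace hb := Nat.mem_rfind.1 hb
    refine Nat.mem_rfind.2 ?_
    simp only [Part.map_eq_map, Part.mem_map_iff] at hb ⊢
    constructor
    · rcases hb.1 with ⟨v, hv, e⟩
      exact ⟨v, hf _ _ hv, e⟩
    · intro m hm
      rcases hb.2 hm with ⟨v, hv, e⟩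
      exact ⟨v, hf _ _ hv, e⟩


theorem pEval_compact {ψ : ℕ → ℕ →. ℕ}
    (hmono : ∀ {i j : ℕ}, i ≤ j → ∀ n a, a ∈ ψ i n → a ∈ ψ j n)
    {φ : ℕ →. ℕ} (hφ : ∀ n a, a ∈ φ n → ∃ i, a ∈ ψ i n) :
    ∀ (c : OCode) (n a : ℕ), a ∈ pEval φ c n → ∃ i, a ∈ pEval (ψ i) c n := by
  intro c
  induction c with
  | zero => exact fun n a h => ⟨0, h⟩
  | succ => exact fun n a h => ⟨0, h⟩
  | left => exact fun n a h => ⟨0, h⟩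
  | right => exact fun n a h => ⟨0, h⟩
  | oracle => exact hφ
  | pair cf cg hf hg =>
    intro n a h
    simp only [pEval, Seq.seq, Part.bind_eq_bind, Part.mem_bind_iff, Part.map_eq_map,
      Part.mem_map_iff] at h ⊢
    rcases h with ⟨g, ⟨x, hx, rfl⟩, y, hy, rfl⟩
    rcases hf _ _ hx with ⟨i₁, h₁⟩
    rcases hg _ _ hy with ⟨i₂, h₂⟩
    exact ⟨max i₁ i₂, _, ⟨x, pEval_mono (fun n a => hmono (le_max_left _ _) n a) _ _ _ h₁, rfl⟩,
      y, pEval_mono (fun n a => hmono (le_max_right _ _) n a) _ _ _ h₂, rfl⟩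
  | comp cf cg hf hg =>
    intro n a h
    simp only [pEval, Part.bind_eq_bind, Part.mem_bind_iff] at h ⊢
    rcases Part.mem_bind_iff.1 h with ⟨x, hx, hy⟩
    rcases hg _ _ hx with ⟨i₁, h₁⟩
    rcases hf _ _ hy with ⟨i₂, h₂⟩
    exact ⟨max i₁ i₂, Part.mem_bind_iff.2 ⟨x, pEval_mono (fun n a => hmono (le_max_left _ _) n a) _ _ _ h₁,
      pEval_mono (fun n a => hmono (le_max_right _ _) n a) _ _ _ h₂⟩⟩
  | prec cf cg hf hg =>
    have key : ∀ (m a' x : ℕ), x ∈ pEval φ (.prec cf cg) (Nat.pair a' m) →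
        ∃ i, x ∈ pEval (ψ i) (.prec cf cg) (Nat.pair a' m) := by
      intro m
      induction m with
      | zero =>
        intro a' x h
        simp only [pEval, Nat.unpaired, Nat.unpair_pair] at h ⊢
        exact hf _ _ h
      | succ m IH =>
        intro a' x h
        simp only [pEval, Nat.unpaired, Nat.unpair_pair, Part.bind_eq_bind,
          Part.mem_bind_iff] at h ⊢
        rcases h with ⟨v, hv, h⟩
        have hv' : v ∈ pEval φ (.prec cf cg) (Nat.pair a' m) := by
          simp only [pEval, Nat.unpaired, Nat.unpair_pair]; exact hv
        rcases IH _ _ hv' with ⟨i₁, h₁⟩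
        rcases hg _ _ h with ⟨i₂, h₂⟩
        have h₁' := pEval_mono (fun n a => hmono (le_max_left i₁ i₂) n a) _ _ _ h₁
        simp only [pEval, Nat.unpaired, Nat.unpair_pair] at h₁'
        exact ⟨max i₁ i₂, v, h₁',
          pEval_mono (fun n a => hmono (le_max_right i₁ i₂) n a) _ _ _ h₂⟩
    intro n a h
    rcases key n.unpair.2 n.unpair.1 a (by rwa [Nat.pair_unpair]) with ⟨i, hi⟩
    exact ⟨i, by rwa [Nat.pair_unpair] at hi⟩
  | rfind' cf hf =>
    have key : ∀ (y : ℕ) (a' m₀ : ℕ),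
        (y ∈ Nat.rfind fun n => (fun m => m = 0) <$> pEval φ cf (Nat.pair a' (n + m₀))) →
        ∃ i, y ∈ Nat.rfind fun n => (fun m => m = 0) <$> pEval (ψ i) cf (Nat.pair a' (n + m₀)) := by
      intro y
      induction y with
      | zero =>
        intro a' m₀ h
        have h1 := Nat.rfind_spec h
        simp only [Part.map_eq_map, Part.mem_map_iff] at h1
        rcases h1 with ⟨v, hv, e⟩
        rcases hf _ _ hv with ⟨i, hi⟩
        refine ⟨i, Nat.mem_rfind.2 ⟨?_, fun hj => by omega⟩⟩
        simp only [Part.map_eq_map, Part.mem_map_iff]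
        exact ⟨v, hi, e⟩
      | succ y IH =>
        intro a' m₀ h
        have h0 := Nat.rfind_min h (Nat.succ_pos y)
        simp only [Part.map_eq_map, Part.mem_map_iff] at h0
        rcases h0 with ⟨v₀, hv₀, e₀⟩
        rcases hf _ _ hv₀ with ⟨i₁, hi₁⟩
        have hshift : y ∈ Nat.rfind fun n => (fun m => m = 0) <$>
            pEval φ cf (Nat.pair a' (n + (m₀ + 1))) := by
          refine Nat.mem_rfind.2 ⟨?_, fun {j} hj => ?_⟩
          · have := Nat.rfind_spec h
            rwa [show y + 1 + m₀ = y + (m₀ + 1) by omega] at this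
          · have := Nat.rfind_min h (show j + 1 < y + 1 by omega)
            rwa [show j + 1 + m₀ = j + (m₀ + 1) by omega] at this
        rcases IH _ _ hshift with ⟨i₂, hi₂⟩
        refine ⟨max i₁ i₂, Nat.mem_rfind.2 ⟨?_, fun {j} hj => ?_⟩⟩
        · have hs := Nat.rfind_spec hi₂
          simp only [Part.map_eq_map, Part.mem_map_iff] at hs ⊢
          rcases hs with ⟨v, hv, e⟩
          refine ⟨v, ?_, e⟩
          have := pEval_mono (fun n a => hmono (le_max_right i₁ i₂) n a) _ _ _ hv
          rwa [show y + (m₀ + 1) = y + 1 + m₀ by omega] at this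
        · simp only [Part.map_eq_map, Part.mem_map_iff]
          rcases Nat.eq_zero_or_pos j with rfl | hj0
          · exact ⟨v₀, pEval_mono (fun n a => hmono (le_max_left i₁ i₂) n a) _ _ _ hi₁, e₀⟩
          · obtain ⟨j', rfl⟩ : ∃ j', j = j' + 1 := ⟨j - 1, by omega⟩
            have hm := Nat.rfind_min hi₂ (show j' < y by omega)
            simp only [Part.map_eq_map, Part.mem_map_iff] at hm
            rcases hm with ⟨v, hv, e⟩
            refine ⟨v, ?_, e⟩
            have := pEval_mono (fun n a => hmono (le_max_right i₁ i₂) n a) _ _ _ hv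
            rwa [show j' + (m₀ + 1) = j' + 1 + m₀ by omega] at this
    intro n a h
    simp only [pEval, Nat.unpaired, Part.mem_map_iff] at h ⊢
    rcases h with ⟨y, hy, rfl⟩
    rcases key y n.unpair.1 n.unpair.2 hy with ⟨i, hi⟩
    exact ⟨i, ⟨y, hi, rfl⟩⟩


open Nat.Partrec (Code)

def tr (o : Code) : OCode → Code
  | .zero => Code.zero
  | .succ => Code.succ
  | .left => Code.left
  | .right => Code.right
  | .oracle => o
  | .pair cf cg => Code.pair (tr o cf) (tr o cg)
  | .comp cf cg => Code.comp (tr o cf) (tr o cg)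
  | .prec cf cg => Code.prec (tr o cf) (tr o cg)
  | .rfind' cf => Code.rfind' (tr o cf)

theorem eval_tr (o : Code) (c : OCode) : (tr o c).eval = pEval o.eval c := by
  induction c <;> simp only [tr, Nat.Partrec.Code.eval, pEval, *] <;> rfl

def embed : Code → OCode
  | Code.zero => .zero
  | Code.succ => .succ
  | Code.left => .left
  | Code.right => .right
  | Code.pair cf cg => .pair (embed cf) (embed cg)
  | Code.comp cf cg => .comp (embed cf) (embed cg)
  | Code.prec cf cg => .prec (embed cf) (embed cg)
  | Code.rfind' cf => .rfind' (embed cf)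

theorem pEval_embed (φ : ℕ →. ℕ) (c : Code) : pEval φ (embed c) = c.eval := by
  induction c <;> simp only [embed, Nat.Partrec.Code.eval, pEval, *] <;> rfl

theorem eval_embed (O : ℕ → Bool) (c : Code) : (embed c).eval O = c.eval := by
  rw [eval_eq_pEval]; exact pEval_embed _ c

def mseq : ℕ → ℕ
  | 0 => 1
  | k + 1 => 4 * mseq k + 8

theorem mseq_lt_succ (k : ℕ) : mseq k < mseq (k + 1) := by
  simp only [mseq]; omega

theorem mseq_strictMono : StrictMono mseq :=
  strictMono_nat_of_lt_succ mseq_lt_succ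

theorem lt_mseq (k : ℕ) : k < mseq k := by
  induction k with
  | zero => simp [mseq]
  | succ k ih => simp only [mseq]; omega

theorem bodd_eq_decide (n : ℕ) : n.bodd = decide (n % 2 = 1) := by
  have := Nat.mod_two_of_bodd n
  cases h : n.bodd <;> rw [h] at this <;> simp [this]

theorem ofNat_add5 (n : ℕ) : OCode.ofNat (n + 5) =
    match n.bodd, n.div2.bodd with
    | false, false =>
      OCode.pair (OCode.ofNat n.div2.div2.unpair.1) (OCode.ofNat n.div2.div2.unpair.2)
    | false, true  =>
      OCode.comp (OCode.ofNat n.div2.div2.unpair.1) (OCode.ofNat n.div2.div2.unpair.2)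
    | true , false =>
      OCode.prec (OCode.ofNat n.div2.div2.unpair.1) (OCode.ofNat n.div2.div2.unpair.2)
    | true , true  => OCode.rfind' (OCode.ofNat n.div2.div2) := by
  rw [OCode.ofNat.eq_def]

theorem ofNat_mseq_succ (k : ℕ) :
    OCode.ofNat (mseq (k + 1)) = OCode.rfind' (OCode.ofNat (mseq k)) := by
  have e : mseq (k + 1) = (4 * mseq k + 3) + 5 := by simp only [mseq]
  have h2 : (4 * mseq k + 3).div2 = 2 * mseq k + 1 := by rw [Nat.div2_val]; omega
  have h1 : (4 * mseq k + 3).bodd = true := by rw [bodd_eq_decide, decide_eq_true_eq]; omega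
  have h3 : (2 * mseq k + 1).bodd = true := by rw [bodd_eq_decide, decide_eq_true_eq]; omega
  have h4 : (2 * mseq k + 1).div2 = mseq k := by rw [Nat.div2_val]; omega
  rw [e, ofNat_add5, h1, h2, h3, h4]

theorem eval_rfind'_none (O : ℕ → Bool) {cf : OCode} (hcf : ∀ x, ¬ ((0 : ℕ) ∈ cf.eval O x))
    (n : ℕ) : (OCode.rfind' cf).eval O n = Part.none := by
  apply Part.eq_none_iff.2
  rintro a h
  simp only [OCode.eval, Nat.unpaired, Part.mem_map_iff] at h
  rcases h with ⟨y, hy, rfl⟩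
  have := Nat.rfind_spec hy
  simp only [Part.map_eq_map, Part.mem_map_iff] at this
  rcases this with ⟨v, hv, e⟩
  simp only [decide_eq_true_eq] at e
  exact hcf _ (e ▸ hv)

theorem eval_ofNat_mseq (O : ℕ → Bool) (k n : ℕ) :
    (OCode.ofNat (mseq (k + 1))).eval O n = Part.none := by
  induction k generalizing n with
  | zero =>
    rw [ofNat_mseq_succ]
    refine eval_rfind'_none O (fun x h => ?_) n
    have : OCode.ofNat (mseq 0) = OCode.succ := by simp [mseq, OCode.ofNat.eq_def]
    rw [this] at h
    simp only [OCode.eval] at h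
    exact absurd (Part.mem_some_iff.1 h) (by omega)
  | succ k ih =>
    rw [ofNat_mseq_succ]
    refine eval_rfind'_none O (fun x h => ?_) n
    rw [ih x] at h
    exact Part.notMem_none _ h

def strPrefix' (X : ℕ → Bool) (l : ℕ) : List Bool := (List.range l).map X

theorem strPrefix'_get? {X : ℕ → Bool} {l n : ℕ} (h : n < l) :
    (strPrefix' X l)[n]? = some (X n) := by
  simp [strPrefix', List.getElem?_map, List.getElem?_range h]

theorem strPrefix'_get?_iff {X : ℕ → Bool} {l n : ℕ} {b : Bool} :
    (strPrefix' X l)[n]? = some b ↔ n < l ∧ b = X n := by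
  constructor
  · intro h
    have hn : n < l := by
      by_contra hn
      rw [List.getElem?_eq_none (by simpa [strPrefix'] using Nat.le_of_not_lt hn)] at h
      exact nomatch h
    rw [strPrefix'_get? hn] at h
    exact ⟨hn, (Option.some_inj.1 h).symm⟩
  · rintro ⟨hn, rfl⟩
    exact strPrefix'_get? hn

def lookFun (z : ℕ) : Option ℕ :=
  (Encodable.decode (α := List Bool) z.unpair.1).bind fun l =>
    (l[z.unpair.2]?).map fun b => (cond b 1 0 : ℕ)

theorem lookFun_primrec : Primrec lookFun :=
  Primrec.option_bind (Primrec.decode.comp (Primrec.fst.comp Primrec.unpair))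
    (Primrec.option_map
      (Primrec.list_getElem?.comp Primrec.snd
        (Primrec.snd.comp (Primrec.unpair.comp Primrec.fst)))
      ((Primrec.dom_bool fun b => (cond b 1 0 : ℕ)).comp Primrec.snd).to₂).to₂

theorem lookFun_partrec : Nat.Partrec fun z => (lookFun z : Part ℕ) :=
  Partrec.nat_iff.1 (Computable.ofOption lookFun_primrec.to_comp)

noncomputable def uCode : Code :=
  (Nat.Partrec.Code.exists_code.1 lookFun_partrec).choose

theorem uCode_eval : uCode.eval = fun z => (lookFun z : Part ℕ) :=
  (Nat.Partrec.Code.exists_code.1 lookFun_partrec).choose_spec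

noncomputable def lookupC (l : List Bool) : Code :=
  Code.comp uCode (Code.pair (Code.const (Encodable.encode l)) Code.id)

theorem lookupC_eval (l : List Bool) (n : ℕ) :
    (lookupC l).eval n = ((l[n]?).map fun b => (cond b 1 0 : ℕ) : Option ℕ) := by
  simp [lookupC, Nat.Partrec.Code.eval, Nat.Partrec.Code.eval_const, Nat.Partrec.Code.eval_id,
    Seq.seq, uCode_eval, lookFun, Encodable.encodek]

theorem mem_lookupC {l : List Bool} {n a : ℕ} :
    a ∈ (lookupC l).eval n ↔ ∃ b, l[n]? = some b ∧ a = cond b 1 0 := by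
  rw [lookupC_eval]
  simp only [Part.mem_ofOption, Option.mem_def, Option.map_eq_some_iff]
  constructor
  · rintro ⟨b, hb, rfl⟩; exact ⟨b, hb, rfl⟩
  · rintro ⟨b, hb, rfl⟩; exact ⟨b, hb, rfl⟩

theorem lookupC_primrec : Primrec lookupC :=
  Nat.Partrec.Code.primrec₂_comp.comp (Primrec.const uCode)
    (Nat.Partrec.Code.primrec₂_pair.comp (Nat.Partrec.Code.primrec_const.comp Primrec.encode)
      (Primrec.const Code.id))

def trN (o : Code) (x : ℕ) : Code := tr o (OCode.ofNat x)

theorem sound_chain {A : ℕ → Bool} {l x k a : ℕ}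
    (h : a ∈ Nat.Partrec.Code.evaln k (trN (lookupC (strPrefix' A l)) x) x) :
    a ∈ (OCode.ofNat x).eval A x := by
  have h1 := Nat.Partrec.Code.evaln_sound h
  unfold trN at h1
  rw [eval_tr] at h1
  rw [eval_eq_pEval]
  refine pEval_mono (fun n a ha => ?_) _ _ _ h1
  rcases mem_lookupC.1 ha with ⟨b, hb, rfl⟩
  rcases strPrefix'_get?_iff.1 hb with ⟨_, rfl⟩
  exact Part.mem_some _

theorem complete_chain {A : ℕ → Bool} {x a : ℕ} (h : a ∈ (OCode.ofNat x).eval A x) :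
    ∃ l k, a ∈ Nat.Partrec.Code.evaln k (trN (lookupC (strPrefix' A l)) x) x := by
  rw [eval_eq_pEval] at h
  have hmono : ∀ {i j : ℕ}, i ≤ j → ∀ n a,
      a ∈ (lookupC (strPrefix' A i)).eval n → a ∈ (lookupC (strPrefix' A j)).eval n := by
    intro i j hij n a ha
    rcases mem_lookupC.1 ha with ⟨b, hb, rfl⟩
    rcases strPrefix'_get?_iff.1 hb with ⟨hn, rfl⟩
    exact mem_lookupC.2 ⟨A n, strPrefix'_get? (lt_of_lt_of_le hn hij), rfl⟩
  have hφ : ∀ n a, a ∈ (fun n => Part.some (cond (A n) 1 0) : ℕ →. ℕ) n →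
      ∃ i, a ∈ (lookupC (strPrefix' A i)).eval n := by
    intro n a ha
    rw [Part.mem_some_iff] at ha
    exact ⟨n + 1, mem_lookupC.2 ⟨A n, strPrefix'_get? (Nat.lt_succ_self n), ha⟩⟩
  rcases pEval_compact hmono hφ (OCode.ofNat x) x a h with ⟨i, hi⟩
  rw [← eval_tr] at hi
  exact ⟨i, Nat.Partrec.Code.evaln_complete.1 hi⟩

def gstep (o : Code) (IH : List Code) : Option Code :=
  if IH.length = 0 then some Code.zero
  else if IH.length = 1 then some Code.succ
  else if IH.length = 2 then some Code.left
  else if IH.length = 3 then some Code.right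
  else if IH.length = 4 then some o
  else
    cond (decide ((IH.length - 5) % 2 = 1))
      (cond (decide ((IH.length - 5) / 2 % 2 = 1))
        ((IH[((IH.length - 5) / 2 / 2)]?).map Code.rfind')
        ((IH[((IH.length - 5) / 2 / 2).unpair.1]?).bind fun a =>
          (IH[((IH.length - 5) / 2 / 2).unpair.2]?).map fun b => Code.prec a b))
      (cond (decide ((IH.length - 5) / 2 % 2 = 1))
        ((IH[((IH.length - 5) / 2 / 2).unpair.1]?).bind fun a =>
          (IH[((IH.length - 5) / 2 / 2).unpair.2]?).map fun b => Code.comp a b)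
        ((IH[((IH.length - 5) / 2 / 2).unpair.1]?).bind fun a =>
          (IH[((IH.length - 5) / 2 / 2).unpair.2]?).map fun b => Code.pair a b))

open Primrec in
theorem gstep_primrec : Primrec₂ gstep := by
  have len : Primrec fun p : Code × List Code => p.2.length := list_length.comp snd
  have n5 : Primrec fun p : Code × List Code => p.2.length - 5 := nat_sub.comp len (const 5)
  have m : Primrec fun p : Code × List Code => (p.2.length - 5) / 2 / 2 :=
    nat_div.comp (nat_div.comp n5 (const 2)) (const 2)
  have hb1 : Primrec fun p : Code × List Code => decide ((p.2.length - 5) % 2 = 1) :=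
    (Primrec.eq.comp (nat_mod.comp n5 (const 2)) (const 1)).decide
  have hb2 : Primrec fun p : Code × List Code => decide ((p.2.length - 5) / 2 % 2 = 1) :=
    (Primrec.eq.comp (nat_mod.comp (nat_div.comp n5 (const 2)) (const 2)) (const 1)).decide
  have g1 : Primrec fun p : Code × List Code =>
      p.2[((p.2.length - 5) / 2 / 2).unpair.1]? :=
    list_getElem?.comp snd (fst.comp (unpair.comp m))
  have g2 : Primrec fun p : Code × List Code =>
      p.2[((p.2.length - 5) / 2 / 2).unpair.2]? :=
    list_getElem?.comp snd (snd.comp (unpair.comp m))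
  have gm : Primrec fun p : Code × List Code => p.2[((p.2.length - 5) / 2 / 2)]? :=
    list_getElem?.comp snd m
  have rf : Primrec fun p : Code × List Code =>
      (p.2[((p.2.length - 5) / 2 / 2)]?).map Code.rfind' :=
    option_map gm ((Nat.Partrec.Code.primrec_rfind'.comp snd).to₂)
  have mkpair : Primrec fun p : Code × List Code =>
      (p.2[((p.2.length - 5) / 2 / 2).unpair.1]?).bind fun a =>
        (p.2[((p.2.length - 5) / 2 / 2).unpair.2]?).map fun b => Code.pair a b :=
    option_bind g1 (option_map (g2.comp fst)
      ((Nat.Partrec.Code.primrec₂_pair.comp (snd.comp fst) snd).to₂)).to₂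
  have mkcomp : Primrec fun p : Code × List Code =>
      (p.2[((p.2.length - 5) / 2 / 2).unpair.1]?).bind fun a =>
        (p.2[((p.2.length - 5) / 2 / 2).unpair.2]?).map fun b => Code.comp a b :=
    option_bind g1 (option_map (g2.comp fst)
      ((Nat.Partrec.Code.primrec₂_comp.comp (snd.comp fst) snd).to₂)).to₂
  have mkprec : Primrec fun p : Code × List Code =>
      (p.2[((p.2.length - 5) / 2 / 2).unpair.1]?).bind fun a =>
        (p.2[((p.2.length - 5) / 2 / 2).unpair.2]?).map fun b => Code.prec a b :=
    option_bind g1 (option_map (g2.comp fst)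
      ((Nat.Partrec.Code.primrec₂_prec.comp (snd.comp fst) snd).to₂)).to₂
  have E : Primrec fun p : Code × List Code =>
      cond (decide ((p.2.length - 5) % 2 = 1))
        (cond (decide ((p.2.length - 5) / 2 % 2 = 1))
          ((p.2[((p.2.length - 5) / 2 / 2)]?).map Code.rfind')
          ((p.2[((p.2.length - 5) / 2 / 2).unpair.1]?).bind fun a =>
            (p.2[((p.2.length - 5) / 2 / 2).unpair.2]?).map fun b => Code.prec a b))
        (cond (decide ((p.2.length - 5) / 2 % 2 = 1))
          ((p.2[((p.2.length - 5) / 2 / 2).unpair.1]?).bind fun a =>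
            (p.2[((p.2.length - 5) / 2 / 2).unpair.2]?).map fun b => Code.comp a b)
          ((p.2[((p.2.length - 5) / 2 / 2).unpair.1]?).bind fun a =>
            (p.2[((p.2.length - 5) / 2 / 2).unpair.2]?).map fun b => Code.pair a b)) :=
    Primrec.cond hb1 (Primrec.cond hb2 rf mkprec) (Primrec.cond hb2 mkcomp mkpair)
  have hiteP : ∀ k : ℕ, PrimrecPred fun p : Code × List Code => p.2.length = k :=
    fun k => Primrec.eq.comp len (const k)
  exact (Primrec.ite (hiteP 0) (const (some Code.zero)) <|
    Primrec.ite (hiteP 1) (const (some Code.succ)) <|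
    Primrec.ite (hiteP 2) (const (some Code.left)) <|
    Primrec.ite (hiteP 3) (const (some Code.right)) <|
    Primrec.ite (hiteP 4) (option_some.comp fst) E).to₂

theorem gstep_spec (o : Code) (x : ℕ) :
    gstep o ((List.range x).map (trN o)) = some (trN o x) := by
  have hlen : ((List.range x).map (trN o)).length = x := by simp
  have hg : ∀ i, i < x → ((List.range x).map (trN o))[i]? = some (trN o i) := by
    intro i hi
    simp [List.getElem?_map, List.getElem?_range hi]
  match x with
  | 0 => simp [gstep, trN, OCode.ofNat, tr]
  | 1 => simp [gstep, trN, OCode.ofNat, tr]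
  | 2 => simp [gstep, trN, OCode.ofNat, tr]
  | 3 => simp [gstep, trN, OCode.ofNat, tr]
  | 4 => simp [gstep, trN, OCode.ofNat, tr]
  | (n+5) =>
    have hdd : n / 2 / 2 = n.div2.div2 := by simp [Nat.div2_val]
    have hm : n.div2.div2 < n + 5 := by
      simp only [Nat.div2_val]
      exact lt_of_le_of_lt (le_trans (Nat.div_le_self _ _) (Nat.div_le_self _ _)) (by omega)
    have h1 : n.div2.div2.unpair.1 < n + 5 := lt_of_le_of_lt (Nat.unpair_left_le _) hm
    have h2 : n.div2.div2.unpair.2 < n + 5 := lt_of_le_of_lt (Nat.unpair_right_le _) hm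
    have hd1 : decide ((n + 5 - 5) % 2 = 1) = n.bodd := by
      rw [bodd_eq_decide]; norm_num
    have hd2 : decide ((n + 5 - 5) / 2 % 2 = 1) = n.div2.bodd := by
      rw [bodd_eq_decide, Nat.div2_val]; norm_num
    unfold gstep
    rw [hlen]
    rw [if_neg (by omega), if_neg (by omega), if_neg (by omega), if_neg (by omega),
      if_neg (by omega)]
    rw [hd1, hd2]
    simp only [Nat.add_sub_cancel, hdd]
    rw [hg _ h1, hg _ h2, hg _ hm]
    have base : trN o (n + 5) = tr o (OCode.ofNat (n + 5)) := rfl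
    rw [base, ofNat_add5]
    cases hb : n.bodd <;> cases hb' : n.div2.bodd <;> simp [tr, trN]

theorem trN_primrec : Primrec₂ trN :=
  Primrec.nat_strong_rec trN gstep_primrec gstep_spec

open Primrec in
theorem primrec_list_all {α β : Type} [Primcodable α] [Primcodable β]
    {f : α → List β} {g : α → β → Bool} (hf : Primrec f) (hg : Primrec₂ g) :
    Primrec fun a => (f a).all (g a) := by
  refine (Primrec.list_foldr hf (const true)
    (((Primrec.dom_bool₂ (· && ·)).comp (hg.comp fst (fst.comp snd))
      (snd.comp snd)).to₂)).of_eq fun a => ?_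
  induction f a with
  | nil => rfl
  | cons b t ih => simp only [List.foldr_cons, List.all_cons, ih]

def prefixList (pre : List Bool) (l : ℕ) : List Bool :=
  (List.range l).map fun i => pre.getD i false

open Primrec in
theorem prefixList_primrec : Primrec₂ prefixList :=
  Primrec.list_map (list_range.comp snd) (((list_getD false).comp (fst.comp fst) snd).to₂)

theorem strPrefix'_getD {X : ℕ → Bool} {l n : ℕ} (h : n < l) :
    (strPrefix' X l).getD n false = X n := by
  rw [List.getD_eq_getElem?_getD, strPrefix'_get? h]
  rfl

theorem prefixList_strPrefix {A : ℕ → Bool} {L l : ℕ} (h : l ≤ L) :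
    prefixList (strPrefix' A L) l = strPrefix' A l := by
  unfold prefixList strPrefix'
  apply List.map_congr_left
  intro i hi
  exact strPrefix'_getD (lt_of_lt_of_le (List.mem_range.1 hi) h)

theorem mseq_primrec : Primrec mseq := by
  have h : Primrec₂ (fun (_ ih : ℕ) => 4 * ih + 8) :=
    ((Primrec.nat_add.comp (Primrec.nat_mul.comp (Primrec.const 4) Primrec.snd)
      (Primrec.const 8)).to₂)
  refine (Primrec.nat_rec₁ 1 h).of_eq fun n => ?_
  induction n with
  | zero => rfl
  | succ n ih => simp only [mseq, ← ih]

def codingOK (σ pre : List Bool) : Bool :=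
  (List.range σ.length).all fun k =>
    if mseq (k + 1) < σ.length then σ.getD (mseq (k + 1)) false == pre.getD k false else true

noncomputable def diagOK (σ pre : List Bool) : Bool :=
  (List.range σ.length).all fun x =>
    (List.range (σ.length + 1)).all fun k =>
      (List.range (σ.length + 1)).all fun l =>
        !(decide (Nat.Partrec.Code.evaln k (trN (lookupC (prefixList pre l)) x) x
          = some (cond (σ.getD x false) 1 0)))

noncomputable def chk (σ pre : List Bool) : Bool := codingOK σ pre && diagOK σ pre

open Primrec in
theorem codingOK_primrec : Primrec₂ codingOK :=
  (primrec_list_all (list_range.comp (list_length.comp fst))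
    (Primrec.ite
      (nat_lt.comp (mseq_primrec.comp (Primrec.succ.comp snd)) (list_length.comp (fst.comp fst)))
      (Primrec.beq.comp
        ((list_getD false).comp (fst.comp fst) (mseq_primrec.comp (Primrec.succ.comp snd)))
        ((list_getD false).comp (snd.comp fst) snd))
      (const true)).to₂).to₂

set_option maxHeartbeats 1000000 in
open Primrec in
theorem diagOK_primrec : Primrec₂ diagOK := by
  have inner : Primrec fun c : (((List Bool × List Bool) × ℕ) × ℕ) × ℕ =>
      !(decide (Nat.Partrec.Code.evaln c.1.2 (trN (lookupC (prefixList c.1.1.1.2 c.2)) c.1.1.2)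
          c.1.1.2 = some (cond (c.1.1.1.1.getD c.1.1.2 false) 1 0))) := by
    have hσ : Primrec fun c : (((List Bool × List Bool) × ℕ) × ℕ) × ℕ => c.1.1.1.1 :=
      fst.comp (fst.comp (fst.comp fst))
    have hpre : Primrec fun c : (((List Bool × List Bool) × ℕ) × ℕ) × ℕ => c.1.1.1.2 :=
      snd.comp (fst.comp (fst.comp fst))
    have hx : Primrec fun c : (((List Bool × List Bool) × ℕ) × ℕ) × ℕ => c.1.1.2 :=
      snd.comp (fst.comp fst)
    have hk : Primrec fun c : (((List Bool × List Bool) × ℕ) × ℕ) × ℕ => c.1.2 :=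
      snd.comp fst
    have hl : Primrec fun c : (((List Bool × List Bool) × ℕ) × ℕ) × ℕ => c.2 := snd
    have hcode : Primrec fun c : (((List Bool × List Bool) × ℕ) × ℕ) × ℕ =>
        trN (lookupC (prefixList c.1.1.1.2 c.2)) c.1.1.2 :=
      trN_primrec.comp (lookupC_primrec.comp (prefixList_primrec.comp hpre hl)) hx
    have hev : Primrec fun c : (((List Bool × List Bool) × ℕ) × ℕ) × ℕ =>
        Nat.Partrec.Code.evaln c.1.2 (trN (lookupC (prefixList c.1.1.1.2 c.2)) c.1.1.2)
          c.1.1.2 :=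
      Nat.Partrec.Code.primrec_evaln.comp ((hk.pair hcode).pair hx)
    have hval : Primrec fun c : (((List Bool × List Bool) × ℕ) × ℕ) × ℕ =>
        some (cond (c.1.1.1.1.getD c.1.1.2 false) 1 0) :=
      option_some.comp ((Primrec.dom_bool fun b => (cond b 1 0 : ℕ)).comp
        ((list_getD false).comp hσ hx))
    exact (Primrec.dom_bool fun b => !b).comp (Primrec.eq.comp hev hval).decide
  exact (primrec_list_all (list_range.comp (list_length.comp fst))
    ((primrec_list_all (list_range.comp (Primrec.succ.comp (list_length.comp (fst.comp fst))))
      ((primrec_list_all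
        (list_range.comp (Primrec.succ.comp (list_length.comp (fst.comp (fst.comp fst)))))
        inner.to₂).to₂)).to₂)).to₂

open Primrec in
theorem chk_primrec : Primrec₂ chk :=
  ((Primrec.dom_bool₂ (· && ·)).comp codingOK_primrec diagOK_primrec).to₂

theorem strPrefix'_length (X : ℕ → Bool) (l : ℕ) : (strPrefix' X l).length = l := by
  simp [strPrefix']

theorem chk_iff {σ pre : List Bool} : chk σ pre = true ↔
    ((∀ k, mseq (k + 1) < σ.length → σ.getD (mseq (k + 1)) false = pre.getD k false) ∧
     (∀ x < σ.length, ∀ k ≤ σ.length, ∀ l ≤ σ.length,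
       Nat.Partrec.Code.evaln k (trN (lookupC (prefixList pre l)) x) x ≠
         some (cond (σ.getD x false) 1 0))) := by
  rw [chk, Bool.and_eq_true]
  unfold codingOK diagOK
  simp only [List.all_eq_true, List.mem_range, Nat.lt_succ_iff]
  constructor
  · rintro ⟨h1, h2⟩
    constructor
    · intro k hk
      have hkl : k < σ.length := by have := lt_mseq (k + 1); omega
      have h := h1 k hkl
      rw [if_pos hk] at h
      simpa using h
    · intro x hx k hk l hl
      have h := h2 x hx k hk l hl
      simpa using h
  · rintro ⟨h1, h2⟩
    constructor
    · intro k hk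
      by_cases h : mseq (k + 1) < σ.length
      · rw [if_pos h]
        simp only [beq_iff_eq]
        exact h1 k h
      · rw [if_neg h]
    · intro x hx k hk l hl
      simpa using h2 x hx k hk l hl

def Tset (A : ℕ → Bool) : Set (List Bool) := {σ | chk σ (strPrefix' A σ.length) = true}

theorem mem_Tset {A : ℕ → Bool} {σ : List Bool} : σ ∈ Tset A ↔
    ((∀ k, mseq (k + 1) < σ.length → σ.getD (mseq (k + 1)) false = A k) ∧
     (∀ x < σ.length, ∀ k ≤ σ.length, ∀ l ≤ σ.length,
       Nat.Partrec.Code.evaln k (trN (lookupC (strPrefix' A l)) x) x ≠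
         some (cond (σ.getD x false) 1 0))) := by
  show chk σ (strPrefix' A σ.length) = true ↔ _
  rw [chk_iff]
  constructor
  · rintro ⟨h1, h2⟩
    constructor
    · intro k hk
      have hkl : k < σ.length := by have := lt_mseq (k + 1); omega
      rw [h1 k hk, strPrefix'_getD hkl]
    · intro x hx k hk l hl
      have h := h2 x hx k hk l hl
      rwa [prefixList_strPrefix hl] at h
  · rintro ⟨h1, h2⟩
    constructor
    · intro k hk
      have hkl : k < σ.length := by have := lt_mseq (k + 1); omega
      rw [h1 k hk, strPrefix'_getD hkl]
    · intro x hx k hk l hl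
      rw [prefixList_strPrefix hl]
      exact h2 x hx k hk l hl

open Classical in
noncomputable def thePath (A : ℕ → Bool) : ℕ → Bool := fun x =>
  if h : ∃ k, mseq (k + 1) = x then A h.choose
  else !(decide ((1 : ℕ) ∈ (OCode.ofNat x).eval A x))

theorem thePath_coding (A : ℕ → Bool) (k : ℕ) : thePath A (mseq (k + 1)) = A k := by
  unfold thePath
  have h : ∃ k', mseq (k' + 1) = mseq (k + 1) := ⟨k, rfl⟩
  rw [dif_pos h]
  congr 1
  have := h.choose_spec
  have := mseq_strictMono.injective this
  omega

open Classical in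
theorem thePath_diag {A : ℕ → Bool} {x : ℕ} (h : ¬ ∃ k, mseq (k + 1) = x) :
    ¬ ((cond (thePath A x) 1 0 : ℕ) ∈ (OCode.ofNat x).eval A x) := by
  intro hmem
  unfold thePath at hmem
  rw [dif_neg h] at hmem
  cases hd : (decide ((1 : ℕ) ∈ (OCode.ofNat x).eval A x)) with
  | false =>
    have h1 := of_decide_eq_false hd
    rw [hd] at hmem
    simp only [Bool.not_false, cond_true] at hmem
    exact h1 hmem
  | true =>
    have h1 := of_decide_eq_true hd
    rw [hd] at hmem
    simp only [Bool.not_true, cond_false] at hmem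
    have := Part.mem_unique h1 hmem
    omega

theorem path_mem_eval {A f : ℕ → Bool} {x : ℕ}
    (hf : ∀ n, strPrefix' f n ∈ Tset A)
    (hmem : (cond (f x) 1 0 : ℕ) ∈ (OCode.ofNat x).eval A x) : False := by
  rcases complete_chain hmem with ⟨l, k, hev⟩
  set n := max (x + 1) (max k l) with hn
  have h2 := (mem_Tset.1 (hf n)).2 x
    (by rw [strPrefix'_length]; omega) k (by rw [strPrefix'_length]; omega)
    l (by rw [strPrefix'_length]; omega)
  rw [strPrefix'_getD (show x < n by omega)] at h2
  exact h2 hev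

theorem thePath_mem (A : ℕ → Bool) (n : ℕ) : strPrefix' (thePath A) n ∈ Tset A := by
  rw [mem_Tset]
  constructor
  · intro k hk
    rw [strPrefix'_length] at hk
    rw [strPrefix'_getD hk, thePath_coding]
  · intro x hx k hk l hl
    rw [strPrefix'_length] at hx
    rw [strPrefix'_getD hx]
    intro hev
    have hmem := sound_chain (Option.mem_def.2 hev)
    by_cases hc : ∃ k', mseq (k' + 1) = x
    · rcases hc with ⟨k', rfl⟩
      rw [eval_ofNat_mseq] at hmem
      exact Part.notMem_none _ hmem
    · exact thePath_diag hc hmem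

theorem path_codes {A f : ℕ → Bool} (hf : ∀ n, strPrefix' f n ∈ Tset A) (k : ℕ) :
    f (mseq (k + 1)) = A k := by
  have h := (mem_Tset.1 (hf (mseq (k + 1) + 1))).1 k
    (by rw [strPrefix'_length]; omega)
  rwa [strPrefix'_getD (Nat.lt_succ_self _)] at h

theorem exists_code_tot {f : ℕ → ℕ} (hf : Primrec f) :
    ∃ c : Code, ∀ n, c.eval n = Part.some (f n) := by
  obtain ⟨c, hc⟩ := Nat.Partrec.Code.exists_code.1 (Partrec.nat_iff.1 hf.to_comp)
  exact ⟨c, fun n => by rw [hc]; rfl⟩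

def fLen (s : ℕ) : ℕ := ((Encodable.decode (α := List Bool) s).getD []).length

def fRev (r : ℕ) : ℕ :=
  Encodable.encode (((Encodable.decode (α := List Bool) r).getD []).reverse)

noncomputable def fChk (z : ℕ) : ℕ :=
  cond (chk ((Encodable.decode (α := List Bool) z.unpair.1).getD [])
    ((Encodable.decode (α := List Bool) z.unpair.2).getD [])) 1 0

open Primrec in
theorem fLen_primrec : Primrec fLen :=
  list_length.comp (Primrec.option_getD.comp Primrec.decode (const []))

open Primrec in
theorem fRev_primrec : Primrec fRev :=
  Primrec.encode.comp (list_reverse.comp (Primrec.option_getD.comp Primrec.decode (const [])))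

open Primrec in
theorem fChk_primrec : Primrec fChk :=
  (Primrec.dom_bool fun b => (cond b 1 0 : ℕ)).comp
    (chk_primrec.comp
      (Primrec.option_getD.comp (Primrec.decode.comp (fst.comp unpair)) (const []))
      (Primrec.option_getD.comp (Primrec.decode.comp (snd.comp unpair)) (const [])))

noncomputable def cLen : Code := (exists_code_tot fLen_primrec).choose
theorem cLen_eval : ∀ n, cLen.eval n = Part.some (fLen n) :=
  (exists_code_tot fLen_primrec).choose_spec

noncomputable def cRev : Code := (exists_code_tot fRev_primrec).choose
theorem cRev_eval : ∀ n, cRev.eval n = Part.some (fRev n) :=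
  (exists_code_tot fRev_primrec).choose_spec

noncomputable def cChk : Code := (exists_code_tot fChk_primrec).choose
theorem cChk_eval : ∀ n, cChk.eval n = Part.some (fChk n) :=
  (exists_code_tot fChk_primrec).choose_spec

def stepO : OCode :=
  OCode.comp OCode.succ (OCode.pair
    (OCode.comp OCode.oracle (embed (Code.comp Code.left Code.right)))
    (embed (Code.comp Code.right Code.right)))

theorem some_bind_pfun (a : ℕ) (f : ℕ →. ℕ) : (Part.some a >>= f) = f a := Part.bind_some a f

theorem stepO_eval (O : ℕ → Bool) (z : ℕ) :
    stepO.eval O z =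
      Part.some (Nat.pair (cond (O z.unpair.2.unpair.1) 1 0) z.unpair.2.unpair.2 + 1) := by
  simp [stepO, OCode.eval, eval_embed, Nat.Partrec.Code.eval, Seq.seq, some_bind_pfun, PFun.coe_val]

noncomputable def cRevPre : OCode :=
  OCode.comp (OCode.prec OCode.zero stepO) (embed (Code.pair Code.zero Code.id))

theorem encode_bool (b : Bool) : Encodable.encode b = cond b 1 0 := by cases b <;> rfl

theorem strPrefix'_succ (X : ℕ → Bool) (n : ℕ) :
    strPrefix' X (n + 1) = strPrefix' X n ++ [X n] := by
  simp [strPrefix', List.range_succ]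

theorem eval_prec_zero' (O : ℕ → Bool) (cf cg : OCode) (a : ℕ) :
    (OCode.prec cf cg).eval O (Nat.pair a 0) = cf.eval O a := by
  simp [OCode.eval, Nat.unpaired]

theorem eval_prec_succ' (O : ℕ → Bool) (cf cg : OCode) (a k : ℕ) :
    (OCode.prec cf cg).eval O (Nat.pair a (k + 1)) =
      (OCode.prec cf cg).eval O (Nat.pair a k) >>= fun i =>
        cg.eval O (Nat.pair a (Nat.pair k i)) := by
  conv_lhs => rw [OCode.eval]
  conv_rhs => rw [OCode.eval]
  simp [Nat.unpaired]

theorem cRevPre_eval (O : ℕ → Bool) (n : ℕ) :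
    cRevPre.eval O n = Part.some (Encodable.encode ((strPrefix' O n).reverse)) := by
  have key : ∀ m, (OCode.prec OCode.zero stepO).eval O (Nat.pair 0 m) =
      Part.some (Encodable.encode ((strPrefix' O m).reverse)) := by
    intro m
    induction m with
    | zero =>
      rw [eval_prec_zero']
      simp [OCode.eval, strPrefix']
      rfl
    | succ m ih =>
      rw [eval_prec_succ', ih]
      simp only [Part.bind_eq_bind, Part.bind_some, stepO_eval, Nat.unpair_pair]
      rw [strPrefix'_succ]
      simp only [List.reverse_append, List.reverse_cons, List.reverse_nil, List.nil_append,
        List.singleton_append]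
      rw [Encodable.encode_list_cons, encode_bool]
  have h0 : (embed (Code.pair Code.zero Code.id)).eval O n = Part.some (Nat.pair 0 n) := by
    rw [eval_embed]
    simp only [Nat.Partrec.Code.eval, Seq.seq, Nat.Partrec.Code.eval_id, Part.map_eq_map,
      Part.bind_eq_bind]
    rw [show ((pure 0 : ℕ →. ℕ) n) = Part.some 0 from rfl]
    simp
  show ((embed (Code.pair Code.zero Code.id)).eval O n) >>= _ = _
  rw [h0]
  rw [some_bind_pfun, key n]

noncomputable def treeOCode : OCode :=
  OCode.comp (embed cChk) (OCode.pair (embed Code.id)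
    (OCode.comp (embed cRev) (OCode.comp cRevPre (embed cLen))))

theorem eval_comp' (O : ℕ → Bool) (cf cg : OCode) (n : ℕ) :
    (OCode.comp cf cg).eval O n = cg.eval O n >>= cf.eval O := by rw [OCode.eval]

theorem eval_pair' (O : ℕ → Bool) (cf cg : OCode) (n : ℕ) :
    (OCode.pair cf cg).eval O n = Nat.pair <$> cf.eval O n <*> cg.eval O n := by
  rw [OCode.eval]

theorem treeOCode_eval (A : ℕ → Bool) (σ : List Bool) :
    treeOCode.eval A (Encodable.encode σ) =
      Part.some (cond (chk σ (strPrefix' A σ.length)) 1 0) := by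
  have h1 : (embed cLen).eval A (Encodable.encode σ) = Part.some σ.length := by
    rw [eval_embed, cLen_eval]
    simp [fLen, Encodable.encodek]
  have h2 : (embed cRev).eval A (Encodable.encode ((strPrefix' A σ.length).reverse)) =
      Part.some (Encodable.encode (strPrefix' A σ.length)) := by
    rw [eval_embed, cRev_eval]
    simp [fRev, Encodable.encodek]
  have h3 : (embed Code.id).eval A (Encodable.encode σ) =
      Part.some (Encodable.encode σ) := by
    rw [eval_embed, Nat.Partrec.Code.eval_id]
  rw [treeOCode, eval_comp', eval_pair', eval_comp', eval_comp', h1, h3]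
  simp only [Part.bind_eq_bind, Part.bind_some, cRevPre_eval, h2, Part.map_eq_map, Seq.seq,
    Part.map_some, some_bind_pfun, cRev_eval]
  rw [eval_embed, cChk_eval]
  simp [fChk, Nat.unpair_pair, Encodable.encodek, fRev]

end OCode

/-- For every real `A` there is a nonempty `Π⁰₁(A)` class `C ⊆ 2^ω` (the paths through a
tree computable in `A`) all of whose members `f` lie in `PA(A)` and satisfy `A ≤ₜₜ f`;
indeed there is a single infinite computable set `M` such that every `f ∈ C` codes `A`
on the positions in `M`, i.e. `Restr(f, M) = A`. -/
theorem exists_pi01_class_of_PA_coding (A : ℕ → Bool) :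
    ∃ T : Set (List Bool), IsStringTree T ∧ TreeComputableIn A T ∧
      (treePaths T).Nonempty ∧
      ∃ M : Set ℕ, M.Infinite ∧ ComputablePred (· ∈ M) ∧
        ∀ f ∈ treePaths T, f ∈ PArel A ∧ TTReducible A f ∧
          (fun i => f (Nat.nth (· ∈ M) i)) = A := by
  classical
  refine ⟨OCode.Tset A, ?_, ?_, ?_, Set.range (fun k => OCode.mseq (k + 1)), ?_, ?_, ?_⟩
  · -- tree
    intro σ τ hσ hpre
    rw [OCode.mem_Tset] at hσ ⊢
    obtain ⟨t, rfl⟩ := hpre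
    have hlen : τ.length ≤ (τ ++ t).length := by simp
    have hget : ∀ i, i < τ.length → (τ ++ t).getD i false = τ.getD i false := by
      intro i hi
      rw [List.getD_append _ _ _ _ hi]
    constructor
    · intro k hk
      rw [← hget _ hk]
      exact hσ.1 k (lt_of_lt_of_le hk hlen)
    · intro x hx k hk l hl
      have h := hσ.2 x (lt_of_lt_of_le hx hlen) k (le_trans hk hlen) l (le_trans hl hlen)
      rwa [hget x hx] at h
  · -- computable in A
    refine ⟨OCode.treeOCode, fun σ => ?_⟩
    rw [OCode.treeOCode_eval]
    by_cases h : σ ∈ OCode.Tset A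
    · have hc : OCode.chk σ (OCode.strPrefix' A σ.length) = true := h
      rw [if_pos h, hc]
      rfl
    · have hc : OCode.chk σ (OCode.strPrefix' A σ.length) = false :=
        Bool.not_eq_true _ ▸ h
      rw [if_neg h, hc]
      rfl
  · -- nonempty
    exact ⟨OCode.thePath A, fun n => OCode.thePath_mem A n⟩
  · -- infinite
    exact Set.infinite_range_of_injective fun a b h => by
      have := OCode.mseq_strictMono.injective h; omega
  · -- computable pred
    rw [ComputablePred.computable_iff]
    refine ⟨fun x => !((List.range (x + 1)).all fun k => !(decide (OCode.mseq (k + 1) = x))),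
      ?_, ?_⟩
    · exact ((Primrec.dom_bool fun b => !b).comp
        (OCode.primrec_list_all (Primrec.list_range.comp Primrec.succ)
          (((Primrec.dom_bool fun b => !b).comp
            (Primrec.eq.comp (OCode.mseq_primrec.comp (Primrec.succ.comp Primrec.snd))
              Primrec.fst).decide).to₂))).to_comp
    · funext x
      apply propext
      simp only [Set.mem_range, Bool.not_eq_true', List.all_eq_false, List.mem_range,
        Bool.not_eq_false, decide_eq_true_eq, Nat.lt_succ_iff]
      constructor
      · rintro ⟨k, hk⟩
        exact ⟨k, by have := OCode.lt_mseq (k + 1); omega, hk⟩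
      · rintro ⟨k, _, hk⟩
        exact ⟨k, hk⟩
  · -- all paths
    intro f hf
    have hf' : ∀ n, OCode.strPrefix' f n ∈ OCode.Tset A := hf
    refine ⟨fun x hmem => OCode.path_mem_eval hf' hmem, ?_, ?_⟩
    · refine ⟨fun n => OCode.mseq (n + 1) + 1,
        (Primrec.nat_add.comp (OCode.mseq_primrec.comp Primrec.succ)
          (Primrec.const 1)).to_comp,
        fun n L => L.getD (OCode.mseq (n + 1)) false,
        ((Primrec.list_getD false).comp Primrec.snd
          (OCode.mseq_primrec.comp (Primrec.succ.comp Primrec.fst))).to₂.to_comp, ?_⟩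
      intro n
      have h1 : ((List.range (OCode.mseq (n + 1) + 1)).map f).getD (OCode.mseq (n + 1)) false
          = f (OCode.mseq (n + 1)) := OCode.strPrefix'_getD (Nat.lt_succ_self _)
      show A n = ((List.range (OCode.mseq (n + 1) + 1)).map f).getD (OCode.mseq (n + 1)) false
      rw [h1, OCode.path_codes hf' n]
    · have hMinf : {n | n ∈ Set.range fun k => OCode.mseq (k + 1)}.Infinite := by
        rw [Set.setOf_mem_eq]
        exact Set.infinite_range_of_injective fun a b h => by
          have := OCode.mseq_strictMono.injective h; omega
      have hq : StrictMono fun k => OCode.mseq (k + 1) := fun a b h =>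
        OCode.mseq_strictMono (by omega)
      have he : Nat.nth (· ∈ Set.range fun k => OCode.mseq (k + 1)) =
          fun k => OCode.mseq (k + 1) := by
        apply (StrictMono.range_inj (Nat.nth_strictMono hMinf) hq).1
        rw [Nat.range_nth_of_infinite hMinf, Set.setOf_mem_eq]
      funext i
      show f (Nat.nth (· ∈ Set.range fun k => OCode.mseq (k + 1)) i) = A i
      rw [he]
      exact OCode.path_codes hf' i
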